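/- For every c ∈ ℝ and τ > 0, the travelling wave u(x,t) = 1/2 + (1/π)·arctan((x+ct)/τ) satisfies, for all x ∈ ℝ and t ∈ ℝ, ∂_t u(x,t) + (1/π)·lim_{ε→0⁺} ∫_{{y : |y−x| ≥ ε}} (u(x,t) − u(y,t))/(x−y)² dy = (c/(πτ))·sin²(π·u(x,t)) − (1/(πτ))·sin(π·u(x,t))·cos(π·u(x,t)); that is, u solves the fractional reaction-diffusion equation ∂_t u + (−Δ)^{1/2} u = (c/τ)·g₀(u) + (1/τ)·g₁(u) with g₀(ζ) = (1/π)·sin²(πζ) and g₁(ζ) = −(1/π)·sin(πζ)·cos(πζ). -/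

import Mathlib

open Real MeasureTheory Filter Topology
open Set

noncomputable def gaux (τ x b : ℝ) (y : ℝ) : ℝ :=
  (1 / π) * ((arctan ((x + b) / τ) - arctan ((y + b) / τ)) / (x - y)
    + (τ / (2 * (τ ^ 2 + (x + b) ^ 2))) * Real.log ((τ ^ 2 + (y + b) ^ 2) / (x - y) ^ 2)
    + ((x + b) / (τ ^ 2 + (x + b) ^ 2)) * arctan ((y + b) / τ))

noncomputable def psiaux (τ x b : ℝ) (y : ℝ) : ℝ :=
  ((1 / π) * (arctan ((x + b) / τ) - arctan ((y + b) / τ))) / (x - y) ^ 2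

lemma hasDerivAt_arctan_aff (τ b : ℝ) (hτ : 0 < τ) (y : ℝ) :
    HasDerivAt (fun y : ℝ => arctan ((y + b) / τ)) (τ / (τ ^ 2 + (y + b) ^ 2)) y := by
  have h0 : HasDerivAt (fun y : ℝ => (y + b) / τ) (1 / τ) y := by
    simpa using ((hasDerivAt_id y).add_const b).div_const τ
  have := (Real.hasDerivAt_arctan ((y + b) / τ)).comp y h0
  refine this.congr_deriv ?_
  have hτ' : (τ : ℝ) ≠ 0 := ne_of_gt hτ
  field_simp

lemma hasDerivAt_gaux {τ x b : ℝ} (hτ : 0 < τ) {y : ℝ} (hy : y ≠ x) :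
    HasDerivAt (gaux τ x b) (psiaux τ x b y) y := by
  have hπ : (π : ℝ) ≠ 0 := Real.pi_ne_zero
  have hτ' : (τ : ℝ) ≠ 0 := ne_of_gt hτ
  have hD : (0:ℝ) < τ ^ 2 + (x + b) ^ 2 := by positivity
  have hQ : (0:ℝ) < τ ^ 2 + (y + b) ^ 2 := by positivity
  have hxy : x - y ≠ 0 := sub_ne_zero.2 (Ne.symm hy)
  have harc := hasDerivAt_arctan_aff τ b hτ y
  have h2 : HasDerivAt (fun y : ℝ => x - y) (-1) y := by
    simpa using (hasDerivAt_id y).const_sub x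
  have hinv : HasDerivAt (fun y : ℝ => (x - y)⁻¹) (-(-1) / (x - y) ^ 2) y := h2.inv hxy
  have ht1 : HasDerivAt (fun y : ℝ => (arctan ((x + b) / τ) - arctan ((y + b) / τ)) / (x - y))
      ((-(τ / (τ ^ 2 + (y + b) ^ 2))) * (x - y)⁻¹
        + (arctan ((x + b) / τ) - arctan ((y + b) / τ)) * (-(-1) / (x - y) ^ 2)) y := by
    simpa [div_eq_mul_inv, Pi.mul_def] using (harc.const_sub (arctan ((x + b) / τ))).mul hinv
  have hp : HasDerivAt (fun y : ℝ => τ ^ 2 + (y + b) ^ 2) (2 * (y + b)) y := by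
    have := (((hasDerivAt_id y).add_const b).pow 2).const_add (τ ^ 2)
    simpa using this
  have hq : HasDerivAt (fun y : ℝ => (x - y) ^ 2) (2 * (x - y) ^ 1 * (-1)) y := h2.pow 2
  have hdiv : HasDerivAt (fun y : ℝ => (τ ^ 2 + (y + b) ^ 2) / (x - y) ^ 2)
      ((2 * (y + b) * (x - y) ^ 2 - (τ ^ 2 + (y + b) ^ 2) * (2 * (x - y) ^ 1 * (-1)))
        / ((x - y) ^ 2) ^ 2) y := hp.div hq (pow_ne_zero 2 hxy)
  have hratio : (τ ^ 2 + (y + b) ^ 2) / (x - y) ^ 2 ≠ 0 :=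
    ne_of_gt (div_pos hQ (by positivity))
  have hlog := hdiv.log hratio
  have ht2 := hlog.const_mul (τ / (2 * (τ ^ 2 + (x + b) ^ 2)))
  have ht3 := harc.const_mul ((x + b) / (τ ^ 2 + (x + b) ^ 2))
  have := ((ht1.add ht2).add ht3).const_mul (1 / π)
  refine this.congr_deriv ?_
  unfold psiaux
  field_simp
  ring

lemma tendsto_ratio_log (τ x b : ℝ) (l : Filter ℝ)
    (hr : Tendsto (fun y : ℝ => (y - x)⁻¹) l (𝓝 0))
    (hne : ∀ᶠ y in l, y ≠ x) :
    Tendsto (fun y : ℝ => Real.log ((τ ^ 2 + (y + b) ^ 2) / (x - y) ^ 2)) l (𝓝 0) := by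
  have h1 : Tendsto (fun y : ℝ => τ ^ 2 * ((y - x)⁻¹) ^ 2 + (1 + (x + b) * (y - x)⁻¹) ^ 2) l
      (𝓝 1) := by
    have := ((hr.pow 2).const_mul (τ ^ 2)).add
      (((hr.const_mul (x + b)).const_add 1).pow 2)
    simpa using this
  have h2 : Tendsto (fun y : ℝ => (τ ^ 2 + (y + b) ^ 2) / (x - y) ^ 2) l (𝓝 1) := by
    refine h1.congr' ?_
    filter_upwards [hne] with y hy
    have hxy : y - x ≠ 0 := sub_ne_zero.2 hy
    rw [show (x - y) ^ 2 = (y - x) ^ 2 by ring]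
    field_simp
    ring
  have hc : ContinuousAt Real.log 1 := Real.continuousAt_log one_ne_zero
  have := hc.tendsto.comp h2
  simpa [Function.comp_def] using this

lemma tendsto_gaux_atTop (τ x b : ℝ) (hτ : 0 < τ) :
    Tendsto (gaux τ x b) atTop (𝓝 ((x + b) / (2 * (τ ^ 2 + (x + b) ^ 2)))) := by
  have hsub : Tendsto (fun y : ℝ => y - x) atTop atTop :=
    tendsto_atTop_add_const_right atTop (-x) tendsto_id
  have hr : Tendsto (fun y : ℝ => (y - x)⁻¹) atTop (𝓝 0) :=
    tendsto_inv_atTop_zero.comp hsub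
  have harg : Tendsto (fun y : ℝ => (y + b) / τ) atTop atTop :=
    (tendsto_atTop_add_const_right atTop b tendsto_id).atTop_div_const hτ
  have harc : Tendsto (fun y : ℝ => arctan ((y + b) / τ)) atTop (𝓝 (π / 2)) :=
    (Real.tendsto_arctan_atTop.mono_right nhdsWithin_le_nhds).comp harg
  have hxyinv : Tendsto (fun y : ℝ => (x - y)⁻¹) atTop (𝓝 0) := by
    have : Tendsto (fun y : ℝ => -(y - x)⁻¹) atTop (𝓝 (-0)) := hr.neg
    refine this.congr' ?_ |>.mono_right (by simp)
    filter_upwards with y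
    rw [← inv_neg, neg_sub]
  have ht1 : Tendsto (fun y : ℝ => (arctan ((x + b) / τ) - arctan ((y + b) / τ)) / (x - y))
      atTop (𝓝 0) := by
    have := ((harc.const_sub (arctan ((x + b) / τ))).mul hxyinv)
    simpa [div_eq_mul_inv] using this
  have ht2 : Tendsto (fun y : ℝ =>
      (τ / (2 * (τ ^ 2 + (x + b) ^ 2))) * Real.log ((τ ^ 2 + (y + b) ^ 2) / (x - y) ^ 2))
      atTop (𝓝 0) := by
    have := (tendsto_ratio_log τ x b atTop hr
      (eventually_atTop.2 ⟨x + 1, fun y hy => by intro h; subst h; linarith⟩)).const_mul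
      (τ / (2 * (τ ^ 2 + (x + b) ^ 2)))
    simpa using this
  have ht3 := harc.const_mul ((x + b) / (τ ^ 2 + (x + b) ^ 2))
  have := ((ht1.add ht2).add ht3).const_mul (1 / π)
  have hπ : (π : ℝ) ≠ 0 := Real.pi_ne_zero
  have hD : (0:ℝ) < τ ^ 2 + (x + b) ^ 2 := by positivity
  rw [show (x + b) / (2 * (τ ^ 2 + (x + b) ^ 2))
      = 1 / π * (0 + 0 + (x + b) / (τ ^ 2 + (x + b) ^ 2) * (π / 2)) by
    field_simp; (try left); ring]
  exact this

lemma tendsto_gaux_atBot (τ x b : ℝ) (hτ : 0 < τ) :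
    Tendsto (gaux τ x b) atBot (𝓝 (-((x + b) / (2 * (τ ^ 2 + (x + b) ^ 2))))) := by
  have hsub : Tendsto (fun y : ℝ => y - x) atBot atBot :=
    tendsto_atBot_add_const_right atBot (-x) tendsto_id
  have hxytop : Tendsto (fun y : ℝ => x - y) atBot atTop := by
    have := tendsto_atTop_add_const_left atBot x tendsto_neg_atBot_atTop
    simpa [sub_eq_add_neg] using this
  have hxyinv : Tendsto (fun y : ℝ => (x - y)⁻¹) atBot (𝓝 0) := hxytop.inv_tendsto_atTop
  have hr : Tendsto (fun y : ℝ => (y - x)⁻¹) atBot (𝓝 0) := by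
    have : Tendsto (fun y : ℝ => -(x - y)⁻¹) atBot (𝓝 (-0)) := hxyinv.neg
    refine this.congr' ?_ |>.mono_right (by simp)
    filter_upwards with y
    rw [← inv_neg, neg_sub]
  have harg : Tendsto (fun y : ℝ => (y + b) / τ) atBot atBot :=
    (tendsto_atBot_add_const_right atBot b tendsto_id).atBot_div_const hτ
  have harc : Tendsto (fun y : ℝ => arctan ((y + b) / τ)) atBot (𝓝 (-(π / 2))) :=
    (Real.tendsto_arctan_atBot.mono_right nhdsWithin_le_nhds).comp harg
  have ht1 : Tendsto (fun y : ℝ => (arctan ((x + b) / τ) - arctan ((y + b) / τ)) / (x - y))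
      atBot (𝓝 0) := by
    have := ((harc.const_sub (arctan ((x + b) / τ))).mul hxyinv)
    simpa [div_eq_mul_inv] using this
  have ht2 : Tendsto (fun y : ℝ =>
      (τ / (2 * (τ ^ 2 + (x + b) ^ 2))) * Real.log ((τ ^ 2 + (y + b) ^ 2) / (x - y) ^ 2))
      atBot (𝓝 0) := by
    have := (tendsto_ratio_log τ x b atBot hr
      (eventually_atBot.2 ⟨x - 1, fun y hy => by intro h; subst h; linarith⟩)).const_mul
      (τ / (2 * (τ ^ 2 + (x + b) ^ 2)))
    simpa using this
  have ht3 := harc.const_mul ((x + b) / (τ ^ 2 + (x + b) ^ 2))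
  have := ((ht1.add ht2).add ht3).const_mul (1 / π)
  have hπ : (π : ℝ) ≠ 0 := Real.pi_ne_zero
  have hD : (0:ℝ) < τ ^ 2 + (x + b) ^ 2 := by positivity
  rw [show -((x + b) / (2 * (τ ^ 2 + (x + b) ^ 2)))
      = 1 / π * (0 + 0 + (x + b) / (τ ^ 2 + (x + b) ^ 2) * -(π / 2)) by
    field_simp; (try left); ring]
  exact this

lemma my_integral_Iic {g g' : ℝ → ℝ} {a l : ℝ}
    (hderiv : ∀ y ∈ Iic a, HasDerivAt g (g' y) y)
    (g'pos : ∀ y ∈ Iic a, 0 ≤ g' y)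
    (hg : Tendsto g atBot (𝓝 l)) :
    IntegrableOn g' (Iic a) ∧ ∫ y in Iic a, g' y = g a - l := by
  have hderivG : ∀ w ∈ Ici (-a), HasDerivAt (fun w : ℝ => g (-w)) (-g' (-w)) w := by
    intro w hw
    have h1 : HasDerivAt (fun w : ℝ => -w) (-1) w := hasDerivAt_neg w
    have h2 : (-w : ℝ) ∈ Iic a := by
      simp only [mem_Iic]; have := mem_Ici.1 hw; linarith
    have := (hderiv (-w) h2).comp w h1
    simpa [mul_comm, Function.comp_def] using this
  have hG : Tendsto (fun w : ℝ => g (-w)) atTop (𝓝 l) := hg.comp tendsto_neg_atTop_atBot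
  have hneg : ∀ w ∈ Ioi (-a), -g' (-w) ≤ 0 := by
    intro w hw
    have : (-w : ℝ) ∈ Iic a := by simp at hw ⊢; linarith
    simpa using g'pos (-w) this
  have hint : IntegrableOn (fun w : ℝ => -g' (-w)) (Ioi (-a)) :=
    integrableOn_Ioi_deriv_of_nonpos' hderivG hneg hG
  have hint2 : IntegrableOn (fun w : ℝ => g' (-w)) (Ioi (-a)) := by
    exact (integrable_neg_iff (f := fun w : ℝ => g' (-w))).1 hint
  have hint3 : IntegrableOn (fun w : ℝ => g' (-w)) (Ici (-a)) := by
    rwa [integrableOn_Ici_iff_integrableOn_Ioi]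
  have key : IntegrableOn g' (Iic a) := by
    have hpre : (fun w : ℝ => -w) ⁻¹' (Iic a) = Ici (-a) := by
      ext w; simp [neg_le]
    have := (MeasurePreserving.integrableOn_comp_preimage
      (Measure.measurePreserving_neg (volume : Measure ℝ))
      (Homeomorph.neg ℝ).measurableEmbedding (f := g') (s := Iic a)).1
    apply this
    rw [hpre]
    exact hint3
  refine ⟨key, ?_⟩
  have hI := integral_Ioi_of_hasDerivAt_of_nonpos' hderivG hneg hG
  have hI2 : ∫ w in Ioi (-a), g' (-w) = g a - l := by
    have := congrArg Neg.neg hI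
    rw [← integral_neg] at this
    simpa using this
  rw [← hI2, integral_comp_neg_Ioi, neg_neg]

lemma psiaux_nonpos {τ x b : ℝ} (hτ : 0 < τ) {y : ℝ} (hy : x ≤ y) : psiaux τ x b y ≤ 0 := by
  have h1 : arctan ((x + b) / τ) ≤ arctan ((y + b) / τ) :=
    Real.arctan_strictMono.monotone (by apply div_le_div_of_nonneg_right (by linarith) hτ.le)
  have hπ : (0:ℝ) < π := Real.pi_pos
  apply div_nonpos_of_nonpos_of_nonneg
  · apply mul_nonpos_of_nonneg_of_nonpos (by positivity) (by linarith)
  · positivity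

lemma psiaux_nonneg {τ x b : ℝ} (hτ : 0 < τ) {y : ℝ} (hy : y ≤ x) : 0 ≤ psiaux τ x b y := by
  have h1 : arctan ((y + b) / τ) ≤ arctan ((x + b) / τ) :=
    Real.arctan_strictMono.monotone (by apply div_le_div_of_nonneg_right (by linarith) hτ.le)
  have hπ : (0:ℝ) < π := Real.pi_pos
  apply div_nonneg
  · apply mul_nonneg (by positivity) (by linarith)
  · positivity

lemma integral_psiaux_eq (τ x b : ℝ) (hτ : 0 < τ) {ε : ℝ} (hε : 0 < ε) :
    ∫ y in {y : ℝ | ε ≤ |y - x|}, psiaux τ x b y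
      = (x + b) / (τ ^ 2 + (x + b) ^ 2) + gaux τ x b (x - ε) - gaux τ x b (x + ε) := by
  have hderivR : ∀ y ∈ Ici (x + ε), HasDerivAt (gaux τ x b) (psiaux τ x b y) y := by
    intro y hy
    exact hasDerivAt_gaux hτ (by have := mem_Ici.1 hy; intro h; subst h; linarith)
  have hnegR : ∀ y ∈ Ioi (x + ε), psiaux τ x b y ≤ 0 := fun y hy =>
    psiaux_nonpos hτ (by have := mem_Ioi.1 hy; linarith)
  have hIoi : ∫ y in Ioi (x + ε), psiaux τ x b y
      = (x + b) / (2 * (τ ^ 2 + (x + b) ^ 2)) - gaux τ x b (x + ε) :=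
    integral_Ioi_of_hasDerivAt_of_nonpos' hderivR hnegR (tendsto_gaux_atTop τ x b hτ)
  have hintR : IntegrableOn (psiaux τ x b) (Ioi (x + ε)) :=
    integrableOn_Ioi_deriv_of_nonpos' hderivR hnegR (tendsto_gaux_atTop τ x b hτ)
  have hintR' : IntegrableOn (psiaux τ x b) (Ici (x + ε)) := by
    rwa [integrableOn_Ici_iff_integrableOn_Ioi]
  have hderivL : ∀ y ∈ Iic (x - ε), HasDerivAt (gaux τ x b) (psiaux τ x b y) y := by
    intro y hy
    exact hasDerivAt_gaux hτ (by have := mem_Iic.1 hy; intro h; subst h; linarith)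
  have hposL : ∀ y ∈ Iic (x - ε), 0 ≤ psiaux τ x b y := fun y hy =>
    psiaux_nonneg hτ (by have := mem_Iic.1 hy; linarith)
  obtain ⟨hintL, hIic⟩ := my_integral_Iic hderivL hposL (tendsto_gaux_atBot τ x b hτ)
  have hset : {y : ℝ | ε ≤ |y - x|} = Iic (x - ε) ∪ Ici (x + ε) := by
    ext y
    simp only [mem_setOf_eq, mem_union, mem_Iic, mem_Ici, le_abs]
    constructor
    · rintro (h | h)
      · right; linarith
      · left; linarith
    · rintro (h | h)
      · right; linarith
      · left; linarith
  have hdisj : Disjoint (Iic (x - ε)) (Ici (x + ε)) :=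
    Iic_disjoint_Ici.2 (by intro h; linarith)
  rw [hset, setIntegral_union hdisj measurableSet_Ici hintL hintR',
    MeasureTheory.integral_Ici_eq_integral_Ioi, hIoi, hIic]
  have hD : (0:ℝ) < τ ^ 2 + (x + b) ^ 2 := by positivity
  field_simp
  ring

set_option maxHeartbeats 1000000 in
lemma tendsto_gaux_diff (τ x b : ℝ) (hτ : 0 < τ) :
    Tendsto (fun ε : ℝ => gaux τ x b (x - ε) - gaux τ x b (x + ε)) (𝓝[>] (0:ℝ)) (𝓝 0) := by
  have hπ : (π : ℝ) ≠ 0 := Real.pi_ne_zero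
  have hτ' : (τ : ℝ) ≠ 0 := ne_of_gt hτ
  have hD : (0:ℝ) < τ ^ 2 + (x + b) ^ 2 := by positivity
  set hfun : ℝ → ℝ := fun ε =>
    2 * arctan ((x + b) / τ) - arctan ((x - ε + b) / τ) - arctan ((x + ε + b) / τ) with hfun_def
  have hid1 : HasDerivAt (fun ε : ℝ => (x - ε + b) / τ) (-1 / τ) 0 := by
    have := (((hasDerivAt_id (0:ℝ)).const_sub x).add_const b).div_const τ
    simpa using this
  have hid2 : HasDerivAt (fun ε : ℝ => (x + ε + b) / τ) (1 / τ) 0 := by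
    have := (((hasDerivAt_id (0:ℝ)).const_add x).add_const b).div_const τ
    simpa using this
  have hd1 : HasDerivAt (fun ε : ℝ => arctan ((x - ε + b) / τ))
      ((1 / (1 + ((x - 0 + b) / τ) ^ 2)) * (-1 / τ)) 0 :=
    (Real.hasDerivAt_arctan ((x - 0 + b) / τ)).comp (h := fun ε : ℝ => (x - ε + b) / τ) 0 hid1
  have hd2 : HasDerivAt (fun ε : ℝ => arctan ((x + ε + b) / τ))
      ((1 / (1 + ((x + 0 + b) / τ) ^ 2)) * (1 / τ)) 0 :=
    (Real.hasDerivAt_arctan ((x + 0 + b) / τ)).comp (h := fun ε : ℝ => (x + ε + b) / τ) 0 hid2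
  have hfd : HasDerivAt hfun 0 0 := by
    have := ((hasDerivAt_const (0:ℝ) (2 * arctan ((x + b) / τ))).sub hd1).sub hd2
    refine this.congr_deriv ?_
    simp only [sub_zero, add_zero]
    ring
  have P1 : Tendsto (fun ε : ℝ => hfun ε / ε) (𝓝[>] (0:ℝ)) (𝓝 0) := by
    rw [hasDerivAt_iff_tendsto_slope] at hfd
    have h0 : hfun 0 = 0 := by
      simp only [hfun_def, sub_zero, add_zero]; ring
    refine (hfd.mono_left (nhdsWithin_mono 0 fun y hy => ne_of_gt hy)).congr' ?_
    filter_upwards [self_mem_nhdsWithin] with ε (hε : (0:ℝ) < ε)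
    rw [slope_def_field, h0, sub_zero, sub_zero]
  have c1 : ContinuousAt (fun ε : ℝ => Real.log (τ ^ 2 + (x - ε + b) ^ 2)) 0 := by
    apply ContinuousAt.comp (Real.continuousAt_log (by positivity)) (by fun_prop)
  have c2 : ContinuousAt (fun ε : ℝ => Real.log (τ ^ 2 + (x + ε + b) ^ 2)) 0 := by
    apply ContinuousAt.comp (Real.continuousAt_log (by positivity)) (by fun_prop)
  have P2 : Tendsto (fun ε : ℝ =>
      Real.log (τ ^ 2 + (x - ε + b) ^ 2) - Real.log (τ ^ 2 + (x + ε + b) ^ 2))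
      (𝓝[>] (0:ℝ)) (𝓝 0) := by
    have := (c1.sub c2).tendsto.mono_left (nhdsWithin_le_nhds (s := Set.Ioi (0:ℝ)))
    simpa [Pi.sub_def] using this
  have c3 : ContinuousAt (fun ε : ℝ => arctan ((x - ε + b) / τ)) 0 := by
    apply Real.continuous_arctan.continuousAt.comp (by fun_prop)
  have c4 : ContinuousAt (fun ε : ℝ => arctan ((x + ε + b) / τ)) 0 := by
    apply Real.continuous_arctan.continuousAt.comp (by fun_prop)
  have P3 : Tendsto (fun ε : ℝ => arctan ((x - ε + b) / τ) - arctan ((x + ε + b) / τ))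
      (𝓝[>] (0:ℝ)) (𝓝 0) := by
    have := (c3.sub c4).tendsto.mono_left (nhdsWithin_le_nhds (s := Set.Ioi (0:ℝ)))
    simpa [Pi.sub_def] using this
  have hall : Tendsto (fun ε : ℝ => (1 / π) * (hfun ε / ε
      + (τ / (2 * (τ ^ 2 + (x + b) ^ 2))) * (Real.log (τ ^ 2 + (x - ε + b) ^ 2)
          - Real.log (τ ^ 2 + (x + ε + b) ^ 2))
      + ((x + b) / (τ ^ 2 + (x + b) ^ 2)) * (arctan ((x - ε + b) / τ)
          - arctan ((x + ε + b) / τ)))) (𝓝[>] (0:ℝ)) (𝓝 0) := by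
    have := ((P1.add (P2.const_mul (τ / (2 * (τ ^ 2 + (x + b) ^ 2))))).add
      (P3.const_mul ((x + b) / (τ ^ 2 + (x + b) ^ 2)))).const_mul (1 / π)
    simpa using this
  refine hall.congr' ?_
  filter_upwards [self_mem_nhdsWithin] with ε (hε : (0:ℝ) < ε)
  have hQ1 : (0:ℝ) < τ ^ 2 + (x - ε + b) ^ 2 := by positivity
  have hQ2 : (0:ℝ) < τ ^ 2 + (x + ε + b) ^ 2 := by positivity
  simp only [gaux, hfun_def]
  rw [show x - (x - ε) = ε from by ring, show x - (x + ε) = -ε from by ring,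
    show ((-ε:ℝ)) ^ 2 = ε ^ 2 from by ring,
    Real.log_div hQ1.ne' (pow_ne_zero 2 (ne_of_gt hε)),
    Real.log_div hQ2.ne' (pow_ne_zero 2 (ne_of_gt hε))]
  set A := arctan ((x + b) / τ) with hA
  set a1 := arctan ((x - ε + b) / τ) with ha1
  set a2 := arctan ((x + ε + b) / τ) with ha2
  set L1 := Real.log (τ ^ 2 + (x - ε + b) ^ 2) with hL1
  set L2 := Real.log (τ ^ 2 + (x + ε + b) ^ 2) with hL2
  rw [div_neg]
  ring

/-- For every `c ∈ ℝ` and `τ > 0`, the travelling wave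
`u(x,t) = 1/2 + (1/π)·arctan((x+ct)/τ)` solves the fractional
reaction-diffusion equation `∂_t u + (−Δ)^{1/2} u = (c/τ)·g₀(u) + (1/τ)·g₁(u)`
with `g₀(ζ) = (1/π)·sin²(πζ)` and `g₁(ζ) = −(1/π)·sin(πζ)·cos(πζ)`, where
`(−Δ)^{1/2}` is given by the principal value singular integral
`(1/π)·lim_{ε→0⁺} ∫_{|y−x| ≥ ε} (u(x,t) − u(y,t))/(x−y)² dy`. -/
theorem travelling_wave_solves_half_laplacian_rde
    (c τ : ℝ) (hτ : 0 < τ)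
    (u : ℝ → ℝ → ℝ)
    (hu : ∀ x t : ℝ, u x t = 1 / 2 + (1 / π) * Real.arctan ((x + c * t) / τ)) :
    ∀ x t : ℝ, ∃ ut Au : ℝ,
      HasDerivAt (fun s : ℝ => u x s) ut t ∧
      Tendsto
        (fun ε : ℝ =>
          (1 / π) * ∫ y in {y : ℝ | ε ≤ |y - x|}, (u x t - u y t) / (x - y) ^ 2)
        (𝓝[>] (0 : ℝ)) (𝓝 Au) ∧
      ut + Au = (c / τ) * ((1 / π) * Real.sin (π * u x t) ^ 2) +
        (1 / τ) * (-(1 / π) * Real.sin (π * u x t) * Real.cos (π * u x t)) := by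
  intro x t
  have hπ : (π : ℝ) ≠ 0 := Real.pi_ne_zero
  have hτ' : (τ : ℝ) ≠ 0 := ne_of_gt hτ
  have hD : (0:ℝ) < τ ^ 2 + (x + c * t) ^ 2 := by positivity
  have hX2 : (0:ℝ) < 1 + ((x + c * t) / τ) ^ 2 := by positivity
  refine ⟨1 / π * (1 / (1 + ((x + c * t) / τ) ^ 2) * (c / τ)),
    (x + c * t) / (π * (τ ^ 2 + (x + c * t) ^ 2)), ?_, ?_, ?_⟩
  · have hfun : (fun s : ℝ => u x s)
        = fun s : ℝ => 1 / 2 + (1 / π) * arctan ((x + c * s) / τ) :=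
      funext fun s => hu x s
    rw [hfun]
    have hin : HasDerivAt (fun s : ℝ => (x + c * s) / τ) (c / τ) t := by
      have := (((hasDerivAt_id t).const_mul c).const_add x).div_const τ
      simpa using this
    exact (((Real.hasDerivAt_arctan ((x + c * t) / τ)).comp t hin).const_mul
      (1 / π)).const_add (1 / 2)
  · have hfun2 : (fun y : ℝ => (u x t - u y t) / (x - y) ^ 2) = psiaux τ x (c * t) := by
      funext y
      rw [hu, hu]
      unfold psiaux
      ring
    have hkey : (fun ε : ℝ => (1 / π) * ((x + c * t) / (τ ^ 2 + (x + c * t) ^ 2)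
          + (gaux τ x (c * t) (x - ε) - gaux τ x (c * t) (x + ε))))
        =ᶠ[𝓝[>] (0:ℝ)] (fun ε : ℝ =>
          (1 / π) * ∫ y in {y : ℝ | ε ≤ |y - x|}, (u x t - u y t) / (x - y) ^ 2) := by
      filter_upwards [self_mem_nhdsWithin] with ε (hε : (0:ℝ) < ε)
      rw [hfun2, integral_psiaux_eq τ x (c * t) hτ hε]
      ring
    have hlim : Tendsto (fun ε : ℝ => (1 / π) * ((x + c * t) / (τ ^ 2 + (x + c * t) ^ 2)
          + (gaux τ x (c * t) (x - ε) - gaux τ x (c * t) (x + ε))))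
        (𝓝[>] (0:ℝ)) (𝓝 ((x + c * t) / (π * (τ ^ 2 + (x + c * t) ^ 2)))) := by
      have hc0 : Tendsto (fun _ : ℝ => (x + c * t) / (τ ^ 2 + (x + c * t) ^ 2))
          (𝓝[>] (0:ℝ)) (𝓝 ((x + c * t) / (τ ^ 2 + (x + c * t) ^ 2))) := tendsto_const_nhds
      have h2 := (hc0.add (tendsto_gaux_diff τ x (c * t) hτ)).const_mul (1 / π)
      rw [show (x + c * t) / (π * (τ ^ 2 + (x + c * t) ^ 2))
          = 1 / π * ((x + c * t) / (τ ^ 2 + (x + c * t) ^ 2) + 0) from by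
        field_simp; ring]
      exact h2
    exact hlim.congr' hkey
  · rw [hu]
    have hX : π * (1 / 2 + 1 / π * arctan ((x + c * t) / τ))
        = π / 2 + arctan ((x + c * t) / τ) := by
      field_simp
    rw [hX]
    have hs : Real.sin (π / 2 + arctan ((x + c * t) / τ))
        = Real.cos (arctan ((x + c * t) / τ)) := by
      simp [Real.sin_add]
    have hc : Real.cos (π / 2 + arctan ((x + c * t) / τ))
        = -Real.sin (arctan ((x + c * t) / τ)) := by
      simp [Real.cos_add]
    rw [hs, hc]
    have h2 : Real.sin (arctan ((x + c * t) / τ)) * Real.cos (arctan ((x + c * t) / τ))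
        = ((x + c * t) / τ) * (1 / (1 + ((x + c * t) / τ) ^ 2)) := by
      rw [show Real.sin (arctan ((x + c * t) / τ)) * Real.cos (arctan ((x + c * t) / τ))
          = Real.tan (arctan ((x + c * t) / τ)) * Real.cos (arctan ((x + c * t) / τ)) ^ 2 from by
        rw [Real.tan_eq_sin_div_cos]
        field_simp [(Real.cos_arctan_pos ((x + c * t) / τ)).ne'], Real.tan_arctan,
        Real.cos_sq_arctan]
    rw [show (-(1 / π) * Real.cos (arctan ((x + c * t) / τ))
        * -Real.sin (arctan ((x + c * t) / τ)))
        = 1 / π * (Real.sin (arctan ((x + c * t) / τ))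
            * Real.cos (arctan ((x + c * t) / τ))) from by ring]
    rw [h2, Real.cos_sq_arctan]
    field_simp
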